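/- Under the hypotheses of the previous position bound (G ≥ −F, η'' = G(η,η'), and the upper bound η(t) < D₂ on [0,T)), set V₃ = max{1 − η₁, 2√(2FD₂), 2√(η₁² + 2Fη₀)}. Then η'(t) > −V₃ for all t ∈ [0,T). -/

import Mathlib

open Set

theorem stmt11
    (T F η₀ η₁ D₂ V₃ : ℝ)
    (hT : 0 < T) (hF : 0 < F) (hη₀ : 0 < η₀) (hD₂ : 0 < D₂)
    (G : ℝ → ℝ → ℝ)
    (hGc : ∀ β γ : ℝ, 0 < β → -F ≤ G β γ)
    (η η' η'' : ℝ → ℝ)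
    (hd1 : ∀ t ∈ Ico 0 T, HasDerivAt η (η' t) t)
    (hd2 : ∀ t ∈ Ico 0 T, HasDerivAt η' (η'' t) t)
    (hpos : ∀ t ∈ Ico 0 T, 0 < η t)
    (hode : ∀ t ∈ Ico 0 T, η'' t = G (η t) (η' t))
    (hinit : η 0 = η₀) (hinit' : η' 0 = η₁)
    (hbound : ∀ t ∈ Ico 0 T, η t < D₂)
    (hV₃ : V₃ = max (max (1 - η₁) (2 * Real.sqrt (2 * F * D₂)))
                    (2 * Real.sqrt (η₁ ^ 2 + 2 * F * η₀))) :
    ∀ t ∈ Ico 0 T, -V₃ < η' t := by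
  have hsq1 : Real.sqrt (2 * F * D₂) ^ 2 = 2 * F * D₂ := Real.sq_sqrt (by positivity)
  have hsq2 : Real.sqrt (η₁ ^ 2 + 2 * F * η₀) ^ 2 = η₁ ^ 2 + 2 * F * η₀ :=
    Real.sq_sqrt (by positivity)
  have hV3b : 2 * Real.sqrt (2 * F * D₂) ≤ V₃ := by
    rw [hV₃]; exact le_max_of_le_left (le_max_right _ _)
  have hV3c : 2 * Real.sqrt (η₁ ^ 2 + 2 * F * η₀) ≤ V₃ := by
    rw [hV₃]; exact le_max_right _ _
  have hV3pos : 0 < V₃ := by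
    have h1 : 0 < Real.sqrt (2 * F * D₂) := Real.sqrt_pos.mpr (by positivity)
    linarith
  set E : ℝ → ℝ := fun s => η' s ^ 2 / 2 + F * η s with hEdef
  have hEderiv : ∀ s ∈ Ico 0 T, HasDerivAt E (η' s * (η'' s + F)) s := by
    intro s hs
    have h1 := ((hd2 s hs).pow 2).div_const 2
    have h2 := (hd1 s hs).const_mul F
    have h3 := h1.add h2
    refine h3.congr_deriv ?_
    ring
  have key : ∀ a b : ℝ, 0 ≤ a → b < T → a ≤ b → (∀ s ∈ Icc a b, η' s ≤ 0) → E b ≤ E a := by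
    intro a b ha hb hab hneg
    have hsub : Icc a b ⊆ Ico 0 T := fun s hs => ⟨le_trans ha hs.1, lt_of_le_of_lt hs.2 hb⟩
    have hanti : AntitoneOn E (Icc a b) := by
      apply antitoneOn_of_deriv_nonpos (convex_Icc a b)
      · intro s hs
        exact (hEderiv s (hsub hs)).continuousAt.continuousWithinAt
      · intro s hs
        rw [interior_Icc] at hs
        exact (hEderiv s (hsub (Ioo_subset_Icc_self hs))).differentiableAt.differentiableWithinAt
      · intro s hs
        rw [interior_Icc] at hs
        have hsI : s ∈ Ico 0 T := hsub (Ioo_subset_Icc_self hs)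
        rw [(hEderiv s hsI).deriv]
        have hGF : 0 ≤ η'' s + F := by
          have h := hGc (η s) (η' s) (hpos s hsI)
          rw [hode s hsI]; linarith
        exact mul_nonpos_of_nonpos_of_nonneg (hneg s (Ioo_subset_Icc_self hs)) hGF
    exact hanti (left_mem_Icc.mpr hab) (right_mem_Icc.mpr hab) hab
  intro t ht
  by_contra hcon
  push_neg at hcon
  have hηt' : η' t ≤ -V₃ := hcon
  have hηtneg : η' t < 0 := by linarith
  have hsqt : V₃ ^ 2 ≤ η' t ^ 2 := by nlinarith
  have hEt : F * η t ≤ E t := by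
    have : 0 ≤ η' t ^ 2 / 2 := by positivity
    simp only [hEdef]; linarith
  have hηtpos : 0 < η t := hpos t ht
  by_cases hall : ∀ s ∈ Icc 0 t, η' s ≤ 0
  · have hEE := key 0 t le_rfl ht.2 ht.1 hall
    have hE0 : E 0 = η₁ ^ 2 / 2 + F * η₀ := by simp [hEdef, hinit, hinit']
    have hEtval : η' t ^ 2 / 2 + F * η t = E t := rfl
    have h4 : 4 * (η₁ ^ 2 + 2 * F * η₀) ≤ V₃ ^ 2 := by
      nlinarith [Real.sqrt_nonneg (η₁ ^ 2 + 2 * F * η₀)]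
    have h5 : 0 < η₁ ^ 2 + 2 * F * η₀ := by positivity
    have h7 : 0 < F * η t := by positivity
    simp only [hEdef] at hEE
    rw [hinit, hinit'] at hEE
    linarith
  · push_neg at hall
    obtain ⟨s₀, hs₀, hs₀pos⟩ := hall
    set S : Set ℝ := {s | s ∈ Icc 0 t ∧ 0 ≤ η' s} with hSdef
    have hIccsub : Icc 0 t ⊆ Ico 0 T := fun s hs => ⟨hs.1, lt_of_le_of_lt hs.2 ht.2⟩
    have hcont : ContinuousOn η' (Icc 0 t) := fun s hs =>
      (hd2 s (hIccsub hs)).continuousAt.continuousWithinAt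
    have hSeq : S = Icc 0 t ∩ η' ⁻¹' (Ici 0) := by
      ext s; simp [hSdef, Set.mem_inter_iff, and_comm]
    have hScl : IsClosed S := by
      rw [hSeq]
      exact hcont.preimage_isClosed_of_isClosed isClosed_Icc isClosed_Ici
    have hSsub : S ⊆ Icc 0 t := fun s hs => hs.1
    have hScomp : IsCompact S := isCompact_Icc.of_isClosed_subset hScl hSsub
    have hSne : S.Nonempty := ⟨s₀, hs₀, le_of_lt hs₀pos⟩
    obtain ⟨t₁, ht₁S, ht₁sup⟩ := hScomp.exists_isGreatest hSne
    have ht₁Icc : t₁ ∈ Icc 0 t := ht₁S.1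
    have ht₁lt : t₁ < t := by
      rcases lt_or_eq_of_le ht₁Icc.2 with h | h
      · exact h
      · exfalso; have := ht₁S.2; rw [h] at this; linarith
    have hneg2 : ∀ s, t₁ < s → s ≤ t → η' s < 0 := by
      intro s hs1 hs2
      by_contra hc
      push_neg at hc
      have : s ∈ S := ⟨⟨le_trans ht₁Icc.1 (le_of_lt hs1), hs2⟩, hc⟩
      have := ht₁sup this
      linarith
    have ht₁le : η' t₁ ≤ 0 := by
      have hcw : ContinuousWithinAt η' (Ioi t₁) t₁ :=
        ((hd2 t₁ (hIccsub ht₁Icc)).continuousAt).continuousWithinAt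
      refine le_of_tendsto hcw ?_
      filter_upwards [Ioc_mem_nhdsGT_of_mem ⟨le_refl t₁, ht₁lt⟩] with s hs
      exact le_of_lt (hneg2 s hs.1 hs.2)
    have ht₁eq : η' t₁ = 0 := le_antisymm ht₁le ht₁S.2
    have hnegIcc : ∀ s ∈ Icc t₁ t, η' s ≤ 0 := by
      intro s hs
      rcases eq_or_lt_of_le hs.1 with h | h
      · rw [← h, ht₁eq]
      · exact le_of_lt (hneg2 s h hs.2)
    have hEE := key t₁ t ht₁Icc.1 ht.2 ht₁Icc.2 hnegIcc
    have hEt₁ : E t₁ = F * η t₁ := by simp [hEdef, ht₁eq]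
    have hηt₁D : η t₁ < D₂ := hbound t₁ (hIccsub ht₁Icc)
    have hEtval : η' t ^ 2 / 2 + F * η t = E t := rfl
    have h4 : 4 * (2 * F * D₂) ≤ V₃ ^ 2 := by
      nlinarith [Real.sqrt_nonneg (2 * F * D₂)]
    have h5 : 0 < 2 * F * D₂ := by positivity
    have h6 : F * η t₁ < F * D₂ := by nlinarith
    have h7 : 0 < F * η t := by positivity
    simp only [hEdef] at hEE
    rw [ht₁eq] at hEE
    linarith
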